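/- arXiv:1311.4185 — 4 statements merged into one kernel-verified Lean document; each statement's English description precedes it below -/
import Mathlib

section
/- Let a_1,...,a_r be positive integers and let ν_r(n) denote the number of tuples (k_1,...,k_r) of nonnegative integers satisfying a_1 k_1 + ... + a_r k_r = n. Then for every n ≥ 1, n · ν_r(n) = Σ_{l=1}^{r} a_l Σ_{i=1}^{⌊n/a_l⌋} ν_r(n − i·a_l). -/
open Finset

private def Tset (r : ℕ) (a : Fin r → ℕ) (m : ℕ) : Finset (Fin r → ℕ) :=
  (Fintype.piFinset fun _ => Finset.range (m+1)).filter fun k => ∑ l, a l * k l = m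

private lemma mem_Tset {r : ℕ} {a : Fin r → ℕ} {m : ℕ} (ha : ∀ l, 0 < a l)
    (k : Fin r → ℕ) (h : ∑ l, a l * k l = m) : k ∈ Tset r a m := by
  simp only [Tset, mem_filter, Fintype.mem_piFinset, mem_range]
  refine ⟨fun l => ?_, h⟩
  have h1 : a l * k l ≤ m := h ▸ Finset.single_le_sum (f := fun j => a j * k j)
    (fun _ _ => Nat.zero_le _) (mem_univ l)
  have h2 : k l ≤ a l * k l := Nat.le_mul_of_pos_left _ (ha l)
  omega

private lemma sum_Tset {r : ℕ} {a : Fin r → ℕ} {m : ℕ} {k : Fin r → ℕ}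
    (hk : k ∈ Tset r a m) : ∑ l, a l * k l = m := (Finset.mem_filter.mp hk).2

private lemma sum_update {r : ℕ} (a : Fin r → ℕ) (l : Fin r) (k : Fin r → ℕ) (c : ℕ) :
    ∑ j, a j * Function.update k l c j = a l * c + ∑ j ∈ univ.erase l, a j * k j := by
  have : (fun j => a j * Function.update k l c j)
      = Function.update (fun j => a j * k j) l (a l * c) := by
    funext j
    by_cases hj : j = l <;> simp [hj, Function.update]
  rw [this, ← Finset.add_sum_erase _ _ (mem_univ l), Function.update_self]
  congr 1
  exact Finset.sum_congr rfl fun j hj => by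
    rw [Function.update_of_ne (Finset.mem_erase.mp hj).1]

theorem linear_diophantine_recursion
    (r : ℕ) (a : Fin r → ℕ) (ha : ∀ l, 0 < a l)
    (ν : ℕ → ℕ)
    (hν : ∀ n, ν n = Nat.card {k : Fin r → ℕ // ∑ l, a l * k l = n})
    (n : ℕ) (hn : 1 ≤ n) :
    n * ν n = ∑ l, a l * ∑ i ∈ Finset.Icc 1 (n / a l), ν (n - i * a l) := by
  have hT : ∀ m, ν m = (Tset r a m).card := by
    intro m
    have hset : {k : Fin r → ℕ | ∑ l, a l * k l = m} = ↑(Tset r a m) := by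
      ext k
      simp only [Set.mem_setOf_eq, Finset.mem_coe]
      exact ⟨fun h => mem_Tset ha k h, fun h => sum_Tset h⟩
    calc ν m = Nat.card {k : Fin r → ℕ // ∑ l, a l * k l = m} := hν m
      _ = Set.ncard {k : Fin r → ℕ | ∑ l, a l * k l = m} := Nat.card_coe_set_eq _
      _ = (Tset r a m).card := by rw [hset, Set.ncard_coe_finset]
  simp only [hT]
  have h1 : n * (Tset r a n).card = ∑ k ∈ Tset r a n, ∑ l, a l * k l := by
    rw [Finset.sum_congr rfl (fun k hk => sum_Tset hk), Finset.sum_const, smul_eq_mul,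
      mul_comm]
  rw [h1, Finset.sum_comm]
  refine Finset.sum_congr rfl fun l _ => ?_
  rw [← Finset.mul_sum]
  congr 1
  -- now: ∑ k in Tset r a n, k l = ∑ i in Icc 1 (n / a l), (Tset r a (n - i * a l)).card
  have key : ∀ k ∈ Tset r a n, k l = ∑ i ∈ Finset.Icc 1 (n / a l),
      (if i ≤ k l then 1 else 0) := by
    intro k hk
    have hkl : k l ≤ n / a l := by
      have h1 : a l * k l ≤ n := (sum_Tset hk) ▸
        Finset.single_le_sum (f := fun j => a j * k j) (fun _ _ => Nat.zero_le _) (mem_univ l)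
      exact Nat.le_div_iff_mul_le (ha l) |>.mpr (by rwa [mul_comm] at h1)
    rw [← Finset.sum_filter]
    have : (Finset.Icc 1 (n / a l)).filter (fun i => i ≤ k l) = Finset.Icc 1 (k l) := by
      clear hν hT h1 hk
      ext i
      simp only [mem_filter, mem_Icc]
      omega
    simp [this]
  have hsc : ∑ k ∈ Tset r a n, k l
      = ∑ k ∈ Tset r a n, ∑ i ∈ Finset.Icc 1 (n / a l), (if i ≤ k l then 1 else 0) :=
    Finset.sum_congr rfl key
  rw [hsc, Finset.sum_comm]
  refine Finset.sum_congr rfl fun i hi => ?_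
  have hia : i * a l ≤ n := (Nat.le_div_iff_mul_le (ha l)).mp (Finset.mem_Icc.mp hi).2
  rw [← Finset.sum_filter]
  simp only [Finset.sum_const, smul_eq_mul, mul_one]
  -- bijection
  apply Finset.card_bij' (fun k _ => Function.update k l (k l - i))
    (fun k _ => Function.update k l (k l + i))
  · intro k hk
    have hik : i ≤ k l := (Finset.mem_filter.mp hk).2
    clear hν hT h1 key hsc hk
    funext j
    rcases eq_or_ne j l with hj | hj
    · subst hj; simp only [Function.update_self]; omega
    · simp only [Function.update_of_ne hj]
  · intro k hk
    clear hν hT h1 key hsc hk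
    funext j
    rcases eq_or_ne j l with hj | hj
    · subst hj; simp only [Function.update_self]; omega
    · simp only [Function.update_of_ne hj]

  · intro k hk
    have hk' := Finset.mem_filter.mp hk
    have hsum := sum_Tset hk'.1
    have hik : i ≤ k l := hk'.2
    apply mem_Tset ha
    rw [sum_update]
    have hrest : a l * k l + ∑ j ∈ univ.erase l, a j * k j = n :=
      (Finset.add_sum_erase univ (fun j => a j * k j) (mem_univ l)).trans hsum
    clear hν hT h1 key hsc hk hk' hsum
    have hmul : a l * (k l - i) + a l * i = a l * k l := by
      rw [← Nat.mul_add]; congr 1; omega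
    have hc : a l * i = i * a l := Nat.mul_comm _ _
    omega
  · intro k hk
    have hsum := sum_Tset hk
    refine Finset.mem_filter.mpr ⟨mem_Tset ha _ ?_, ?_⟩
    · rw [sum_update]
      have hrest : a l * k l + ∑ j ∈ univ.erase l, a j * k j = n - i * a l :=
        (Finset.add_sum_erase univ (fun j => a j * k j) (mem_univ l)).trans hsum
      clear hν hT h1 key hsc hk hsum
      have h2 : a l * (k l + i) = a l * k l + a l * i := Nat.mul_add _ _ _
      have h3 : a l * i = i * a l := Nat.mul_comm _ _
      omega
    · simp [Function.update_self]
end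

section
/- Let a_1,...,a_r be positive integers and ν_r(n) the number of nonnegative integer solutions of a_1 k_1 + ... + a_r k_r = n. Define ρ(m) = Σ_{l : a_l | m} a_l (the sum of those coefficients a_l dividing m, counted with multiplicity). Then for n ≥ 1, n · ν_r(n) = Σ_{m=1}^{n} ρ(m) ν_r(n − m). -/
open Finset

theorem linear_diophantine_recursion_divisor_form
    (r : ℕ) (a : Fin r → ℕ) (ha : ∀ l, 0 < a l)
    (ν : ℕ → ℕ)
    (hν : ∀ n, ν n = Nat.card {k : Fin r → ℕ // ∑ l, a l * k l = n})
    (ρ : ℕ → ℕ)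
    (hρ : ∀ m, ρ m = ∑ l, if a l ∣ m then a l else 0)
    (n : ℕ) (hn : 1 ≤ n) :
    n * ν n = ∑ m ∈ Finset.Icc 1 n, ρ m * ν (n - m) := by
  classical
  set F : ℕ → Finset (Fin r → ℕ) := fun N =>
    (Fintype.piFinset fun _ => Finset.range (N+1)).filter (fun k => ∑ l, a l * k l = N)
    with hF
  have hbound : ∀ N (k : Fin r → ℕ), (∑ l, a l * k l = N) → ∀ l, k l ≤ N := by
    intro N k hk l
    calc k l ≤ a l * k l := Nat.le_mul_of_pos_left _ (ha l)
      _ ≤ ∑ i, a i * k i :=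
        Finset.single_le_sum (f := fun i => a i * k i) (fun i _ => Nat.zero_le _) (mem_univ l)
      _ = N := hk
  have hmem : ∀ N k, k ∈ F N ↔ ∑ l, a l * k l = N := by
    intro N k
    simp only [hF, mem_filter, Fintype.mem_piFinset, mem_range]
    constructor
    · exact fun h => h.2
    · intro h; exact ⟨fun l => Nat.lt_succ_of_le (hbound N k h l), h⟩
  have hν' : ∀ N, ν N = (F N).card := by
    intro N
    have hset : {k : Fin r → ℕ | ∑ l, a l * k l = N} = ↑(F N) := by
      ext k; simp [hmem]
    rw [hν]
    have h1 : Nat.card {k : Fin r → ℕ // ∑ l, a l * k l = N}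
        = ({k : Fin r → ℕ | ∑ l, a l * k l = N}).ncard := by
      rw [← Nat.card_coe_set_eq]; rfl
    rw [h1, hset, Set.ncard_coe_finset]
  have hsum_upd : ∀ (k : Fin r → ℕ) (l : Fin r) (v : ℕ),
      ∑ i, a i * Function.update k l v i
        = a l * v + ∑ i ∈ univ.erase l, a i * k i := by
    intro k l v
    rw [← Finset.add_sum_erase _ _ (mem_univ l)]
    congr 1
    · simp
    · exact Finset.sum_congr rfl fun i hi => by
        rw [Function.update_of_ne (mem_erase.mp hi).1]
  have hsplit : ∀ (k : Fin r → ℕ) (l : Fin r),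
      ∑ i, a i * k i = a l * k l + ∑ i ∈ univ.erase l, a i * k i := by
    intro k l
    rw [← Finset.add_sum_erase _ _ (mem_univ l)]
  -- the key card bijection
  have hcard : ∀ (l : Fin r) (j : ℕ), 1 ≤ j → a l * j ≤ n →
      ((F n).filter (fun k => j ≤ k l)).card = (F (n - a l * j)).card := by
    intro l j hj hjn
    apply Finset.card_bij' (fun k _ => Function.update k l (k l - j))
      (fun k _ => Function.update k l (k l + j))
    case hi =>
      intro k hk
      rw [mem_filter, hmem] at hk
      obtain ⟨hk1, hk2⟩ := hk
      rw [hmem, hsum_upd]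
      have e1 : a l * (k l - j) + a l * j = a l * k l := by
        rw [← Nat.mul_add, Nat.sub_add_cancel hk2]
      have e2 : a l * k l + ∑ i ∈ univ.erase l, a i * k i = n := by
        rw [← hsplit]; exact hk1
      omega
    case hj =>
      intro k hk
      rw [hmem] at hk
      rw [mem_filter, hmem, hsum_upd]
      refine ⟨?_, by simp⟩
      have e2 : a l * k l + ∑ i ∈ univ.erase l, a i * k i = n - a l * j := by
        rw [← hsplit]; exact hk
      have e1 : a l * (k l + j) = a l * k l + a l * j := Nat.mul_add _ _ _
      omega
    case left_inv =>
      intro k hk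
      rw [mem_filter, hmem] at hk
      funext i
      rcases eq_or_ne i l with rfl | h
      · simp [Nat.sub_add_cancel hk.2]
      · simp [Function.update_of_ne h]
    case right_inv =>
      intro k hk
      funext i
      rcases eq_or_ne i l with rfl | h
      · simp
      · simp [Function.update_of_ne h]
  -- per-coordinate key identity
  have hkey : ∀ l : Fin r,
      ∑ k ∈ F n, k l = ∑ m ∈ (Icc 1 n).filter (fun m => a l ∣ m), ν (n - m) := by
    intro l
    have hD : ∀ k ∈ F n, k l ≤ n / a l := by
      intro k hk
      rw [hmem] at hk
      rw [Nat.le_div_iff_mul_le (ha l)]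
      calc k l * a l = a l * k l := Nat.mul_comm _ _
        _ ≤ ∑ i, a i * k i :=
          Finset.single_le_sum (f := fun i => a i * k i) (fun i _ => Nat.zero_le _) (mem_univ l)
        _ = n := hk
    -- reindex the RHS
    have hre : ∑ m ∈ (Icc 1 n).filter (fun m => a l ∣ m), ν (n - m)
        = ∑ j ∈ Icc 1 (n / a l), ν (n - a l * j) := by
      apply Finset.sum_nbij' (i := fun m => m / a l) (j := fun j => a l * j)
      · intro m hm
        rw [mem_filter, mem_Icc] at hm
        obtain ⟨⟨hm1, hm2⟩, hdvd⟩ := hm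
        rw [mem_Icc]
        constructor
        · have : a l ≤ m := Nat.le_of_dvd hm1 hdvd
          exact (Nat.one_le_div_iff (ha l)).mpr this
        · exact Nat.div_le_div_right hm2
      · intro j hj
        rw [mem_Icc] at hj
        rw [mem_filter, mem_Icc]
        have h2 : a l * j ≤ n := by
          rw [Nat.le_div_iff_mul_le (ha l)] at hj
          calc a l * j = j * a l := Nat.mul_comm _ _
            _ ≤ n := hj.2
        exact ⟨⟨Nat.one_le_iff_ne_zero.mpr (Nat.mul_ne_zero (ha l).ne' (by omega)), h2⟩, Dvd.intro _ rfl⟩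
      · intro m hm
        rw [mem_filter] at hm
        exact Nat.mul_div_cancel' hm.2
      · intro j hj
        exact Nat.mul_div_cancel_left _ (ha l)
      · intro m hm
        rw [mem_filter] at hm
        rw [Nat.mul_div_cancel' hm.2]
    rw [hre]
    -- now expand k l as a count
    have hexp : ∀ k ∈ F n, k l = ∑ j ∈ Icc 1 (n / a l), if j ≤ k l then 1 else 0 := by
      intro k hk
      have hf : (Icc 1 (n / a l)).filter (fun j => j ≤ k l) = Icc 1 (k l) := by
        ext j
        simp only [mem_filter, mem_Icc]
        have := hD k hk
        omega
      rw [← Finset.sum_filter, hf, Finset.sum_const, smul_eq_mul, mul_one, Nat.card_Icc]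
      omega
    rw [Finset.sum_congr rfl hexp, Finset.sum_comm]
    apply Finset.sum_congr rfl
    intro j hj
    rw [mem_Icc] at hj
    have hjn : a l * j ≤ n := by
      rw [Nat.le_div_iff_mul_le (ha l)] at hj
      calc a l * j = j * a l := Nat.mul_comm _ _
        _ ≤ n := hj.2
    rw [← Finset.sum_filter, Finset.sum_const, smul_eq_mul, mul_one,
      hcard l j hj.1 hjn, hν']
  -- assemble
  have lhs : n * ν n = ∑ l, a l * ∑ k ∈ F n, k l := by
    have h1 : ∑ k ∈ F n, ∑ l, a l * k l = ∑ k ∈ F n, n := by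
      apply Finset.sum_congr rfl
      intro k hk
      exact (hmem n k).mp hk
    rw [Finset.sum_const, smul_eq_mul] at h1
    calc n * ν n = (F n).card * n := by rw [hν', Nat.mul_comm]
      _ = ∑ k ∈ F n, ∑ l, a l * k l := h1.symm
      _ = ∑ l, ∑ k ∈ F n, a l * k l := Finset.sum_comm
      _ = ∑ l, a l * ∑ k ∈ F n, k l := by
          apply Finset.sum_congr rfl
          intro l _
          rw [Finset.mul_sum]
  have rhs : ∑ m ∈ Icc 1 n, ρ m * ν (n - m)
      = ∑ l, a l * ∑ m ∈ (Icc 1 n).filter (fun m => a l ∣ m), ν (n - m) := by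
    calc ∑ m ∈ Icc 1 n, ρ m * ν (n - m)
        = ∑ m ∈ Icc 1 n, ∑ l, (if a l ∣ m then a l else 0) * ν (n - m) := by
          apply Finset.sum_congr rfl
          intro m _
          rw [hρ, Finset.sum_mul]
      _ = ∑ l, ∑ m ∈ Icc 1 n, (if a l ∣ m then a l else 0) * ν (n - m) := Finset.sum_comm
      _ = ∑ l, a l * ∑ m ∈ (Icc 1 n).filter (fun m => a l ∣ m), ν (n - m) := by
          apply Finset.sum_congr rfl
          intro l _
          rw [Finset.mul_sum, Finset.sum_filter]
          apply Finset.sum_congr rfl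
          intro m _
          by_cases h : a l ∣ m <;> simp [h]
  rw [lhs, rhs]
  exact Finset.sum_congr rfl fun l _ => by rw [hkey l]
end

section
/- Let p(n) denote the number of partitions of n and σ(m) the sum of divisors of m. Then for n ≥ 1, n · p(n) = Σ_{m=1}^{n} σ(m) p(n − m). -/
open Finset Multiset

/-- Adding `j` copies of `d` gives a bijection between partitions of `n - d*j` and
partitions of `n` containing at least `j` copies of `d`. -/
def addReplicateEquiv (n d j : ℕ) (hd : 0 < d) (hj : d * j ≤ n) :
    (n - d * j).Partition ≃ {l : n.Partition // j ≤ l.parts.count d} where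
  toFun μ :=
    ⟨⟨μ.parts + Multiset.replicate j d,
      by
        intro i hi
        rcases Multiset.mem_add.mp hi with h | h
        · exact μ.parts_pos h
        · rw [Multiset.eq_of_mem_replicate h]; exact hd,
      by
        rw [Multiset.sum_add, μ.parts_sum, Multiset.sum_replicate, smul_eq_mul, mul_comm j d]
        omega⟩,
      by simp [Multiset.count_replicate]⟩
  invFun l :=
    ⟨l.1.parts - Multiset.replicate j d,
      fun hi => l.1.parts_pos (Multiset.mem_of_le (Multiset.sub_le_self _ _) hi),
      by
        have hle : Multiset.replicate j d ≤ l.1.parts :=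
          Multiset.le_count_iff_replicate_le.mp l.2
        have h := congrArg Multiset.sum (tsub_add_cancel_of_le hle)
        rw [Multiset.sum_add, Multiset.sum_replicate, smul_eq_mul, mul_comm j d, l.1.parts_sum] at h
        omega⟩
  left_inv μ := by
    ext1
    simp
  right_inv l := by
    have hle : Multiset.replicate j d ≤ l.1.parts :=
      Multiset.le_count_iff_replicate_le.mp l.2
    ext1
    ext1
    simp [tsub_add_cancel_of_le hle]

lemma card_filter_count (n d j : ℕ) (hd : 0 < d) (hj : d * j ≤ n) :
    (Finset.univ.filter (fun l : n.Partition => j ≤ l.parts.count d)).card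
      = Fintype.card ((n - d * j).Partition) := by
  rw [← Fintype.card_subtype]
  exact (Fintype.card_congr (addReplicateEquiv n d j hd hj)).symm

lemma count_le_div (n d : ℕ) (hd : 0 < d) (l : n.Partition) :
    l.parts.count d ≤ n / d := by
  have hr : Multiset.replicate (l.parts.count d) d ≤ l.parts :=
    Multiset.le_count_iff_replicate_le.mp le_rfl
  have h := congrArg Multiset.sum (tsub_add_cancel_of_le hr)
  rw [Multiset.sum_add, Multiset.sum_replicate, smul_eq_mul, l.parts_sum] at h
  have : l.parts.count d * d ≤ n := by omega
  exact Nat.le_div_iff_mul_le hd |>.mpr this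

lemma count_sum_eq (n d : ℕ) (hd : 0 < d) :
    ∑ l : n.Partition, l.parts.count d
      = ∑ j ∈ Finset.Icc 1 (n / d), Fintype.card ((n - d * j).Partition) := by
  have h1 : ∀ l : n.Partition,
      l.parts.count d
        = ∑ j ∈ Finset.Icc 1 (n / d), if j ≤ l.parts.count d then 1 else 0 := by
    intro l
    rw [← Finset.card_filter]
    have : (Finset.Icc 1 (n / d)).filter (fun j => j ≤ l.parts.count d)
        = Finset.Icc 1 (l.parts.count d) := by
      ext j
      have := count_le_div n d hd l
      simp only [Finset.mem_filter, Finset.mem_Icc]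
      omega
    simp [this]
  calc ∑ l : n.Partition, l.parts.count d
      = ∑ l : n.Partition, ∑ j ∈ Finset.Icc 1 (n / d),
          if j ≤ l.parts.count d then 1 else 0 := by
        exact Finset.sum_congr rfl fun l _ => h1 l
    _ = ∑ j ∈ Finset.Icc 1 (n / d), ∑ l : n.Partition,
          if j ≤ l.parts.count d then 1 else 0 := Finset.sum_comm
    _ = ∑ j ∈ Finset.Icc 1 (n / d), Fintype.card ((n - d * j).Partition) := by
        refine Finset.sum_congr rfl fun j hj => ?_
        rw [← Finset.card_filter]
        apply card_filter_count n d j hd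
        rw [Finset.mem_Icc] at hj
        calc d * j ≤ d * (n / d) := Nat.mul_le_mul_left d hj.2
          _ ≤ n := Nat.mul_div_le n d

lemma multiset_sum_eq (F : Finset ℕ) (s : Multiset ℕ) (hs : ∀ i ∈ s, i ∈ F) :
    s.sum = ∑ d ∈ F, d * s.count d := by
  induction s using Multiset.induction with
  | empty => simp
  | cons a s ih =>
    have ha : a ∈ F := hs a (Multiset.mem_cons_self a s)
    have hs' : ∀ i ∈ s, i ∈ F := fun i hi => hs i (Multiset.mem_cons_of_mem hi)
    rw [Multiset.sum_cons, ih hs']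
    have : ∀ d ∈ F, d * (a ::ₘ s).count d
        = (if d = a then a else 0) + d * s.count d := by
      intro d _
      rw [Multiset.count_cons]
      split <;> rename_i h
      · subst h; ring
      · simp
    rw [Finset.sum_congr rfl this, Finset.sum_add_distrib, Finset.sum_ite_eq' F a (fun _ => a),
      if_pos ha]

lemma parts_sum_Icc (n : ℕ) (l : n.Partition) :
    ∑ d ∈ Finset.Icc 1 n, d * l.parts.count d = n := by
  rw [← multiset_sum_eq _ l.parts, l.parts_sum]
  intro i hi
  rw [Finset.mem_Icc]
  constructor
  · exact l.parts_pos hi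
  · have hr : Multiset.replicate 1 i ≤ l.parts := by
      rw [← Multiset.le_count_iff_replicate_le]
      exact Multiset.one_le_count_iff_mem.mpr hi
    have h := congrArg Multiset.sum (tsub_add_cancel_of_le hr)
    rw [Multiset.sum_add, Multiset.sum_replicate, smul_eq_mul, l.parts_sum] at h
    omega

lemma divisors_eq_filter (n m : ℕ) (hm : m ∈ Finset.Icc 1 n) :
    m.divisors = (Finset.Icc 1 n).filter (fun d => d ∣ m) := by
  rw [Finset.mem_Icc] at hm
  ext d
  rw [Nat.mem_divisors, Finset.mem_filter, Finset.mem_Icc]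
  constructor
  · rintro ⟨hd, hm0⟩
    have h1 : 0 < d := Nat.pos_of_dvd_of_pos hd (by omega)
    have h2 : d ≤ m := Nat.le_of_dvd (by omega) hd
    exact ⟨⟨h1, le_trans h2 hm.2⟩, hd⟩
  · rintro ⟨_, hd⟩
    exact ⟨hd, by omega⟩

lemma inner_reindex (n d : ℕ) (hd : 0 < d) (f : ℕ → ℕ) :
    ∑ m ∈ (Finset.Icc 1 n).filter (fun m => d ∣ m), f m
      = ∑ j ∈ Finset.Icc 1 (n / d), f (d * j) := by
  refine Finset.sum_nbij' (fun m => m / d) (fun j => d * j) ?_ ?_ ?_ ?_ ?_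
  · intro m hm
    rw [Finset.mem_filter, Finset.mem_Icc] at hm
    obtain ⟨⟨h1, h2⟩, h3⟩ := hm
    rw [Finset.mem_Icc]
    constructor
    · exact (Nat.one_le_div_iff hd).mpr (Nat.le_of_dvd (by omega) h3)
    · exact Nat.div_le_div_right h2
  · intro j hj
    rw [Finset.mem_Icc] at hj
    rw [Finset.mem_filter, Finset.mem_Icc]
    refine ⟨⟨by nlinarith [hj.1], ?_⟩, Dvd.intro j rfl⟩
    calc d * j ≤ d * (n / d) := Nat.mul_le_mul_left d hj.2
      _ ≤ n := Nat.mul_div_le n d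
  · intro m hm
    rw [Finset.mem_filter] at hm
    exact Nat.mul_div_cancel' hm.2
  · intro j _
    exact Nat.mul_div_cancel_left j hd
  · intro m hm
    rw [Finset.mem_filter] at hm
    rw [Nat.mul_div_cancel' hm.2]

theorem partition_sigma_recursion (n : ℕ) (hn : 1 ≤ n) :
    n * Fintype.card (Nat.Partition n)
      = ∑ m ∈ Finset.Icc 1 n,
          (∑ d ∈ m.divisors, d) * Fintype.card (Nat.Partition (n - m)) := by
  have lhs : n * Fintype.card (Nat.Partition n)
      = ∑ d ∈ Finset.Icc 1 n, ∑ j ∈ Finset.Icc 1 (n / d),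
          d * Fintype.card ((n - d * j).Partition) := by
    calc n * Fintype.card (Nat.Partition n)
        = ∑ l : n.Partition, n := by rw [Finset.sum_const, Finset.card_univ, smul_eq_mul, mul_comm]
      _ = ∑ l : n.Partition, ∑ d ∈ Finset.Icc 1 n, d * l.parts.count d :=
          Finset.sum_congr rfl fun l _ => (parts_sum_Icc n l).symm
      _ = ∑ d ∈ Finset.Icc 1 n, ∑ l : n.Partition, d * l.parts.count d := Finset.sum_comm
      _ = ∑ d ∈ Finset.Icc 1 n, d * ∑ l : n.Partition, l.parts.count d := by
          simp [Finset.mul_sum]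
      _ = ∑ d ∈ Finset.Icc 1 n, ∑ j ∈ Finset.Icc 1 (n / d),
            d * Fintype.card ((n - d * j).Partition) := by
          refine Finset.sum_congr rfl fun d hd => ?_
          rw [Finset.mem_Icc] at hd
          rw [count_sum_eq n d (by omega), Finset.mul_sum]
  have rhs : ∑ m ∈ Finset.Icc 1 n,
        (∑ d ∈ m.divisors, d) * Fintype.card (Nat.Partition (n - m))
      = ∑ d ∈ Finset.Icc 1 n, ∑ j ∈ Finset.Icc 1 (n / d),
          d * Fintype.card ((n - d * j).Partition) := by
    calc ∑ m ∈ Finset.Icc 1 n, (∑ d ∈ m.divisors, d) * Fintype.card (Nat.Partition (n - m))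
        = ∑ m ∈ Finset.Icc 1 n, ∑ d ∈ (Finset.Icc 1 n).filter (fun d => d ∣ m),
            d * Fintype.card (Nat.Partition (n - m)) := by
          refine Finset.sum_congr rfl fun m hm => ?_
          rw [← divisors_eq_filter n m hm, Finset.sum_mul]
      _ = ∑ m ∈ Finset.Icc 1 n, ∑ d ∈ Finset.Icc 1 n,
            if d ∣ m then d * Fintype.card (Nat.Partition (n - m)) else 0 := by
          refine Finset.sum_congr rfl fun m _ => ?_
          rw [Finset.sum_filter]
      _ = ∑ d ∈ Finset.Icc 1 n, ∑ m ∈ Finset.Icc 1 n,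
            if d ∣ m then d * Fintype.card (Nat.Partition (n - m)) else 0 := Finset.sum_comm
      _ = ∑ d ∈ Finset.Icc 1 n, ∑ m ∈ (Finset.Icc 1 n).filter (fun m => d ∣ m),
            d * Fintype.card (Nat.Partition (n - m)) := by
          refine Finset.sum_congr rfl fun d _ => ?_
          rw [Finset.sum_filter]
      _ = ∑ d ∈ Finset.Icc 1 n, ∑ j ∈ Finset.Icc 1 (n / d),
            d * Fintype.card ((n - d * j).Partition) := by
          refine Finset.sum_congr rfl fun d hd => ?_
          rw [Finset.mem_Icc] at hd
          exact inner_reindex n d (by omega) (fun m => d * Fintype.card (Nat.Partition (n - m)))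
  rw [lhs, rhs]
end

section
/- Let g_1,...,g_r : ℕ → ℕ be strictly increasing with g_l(0) = 0 and ν_r(n) the number of nonnegative solutions of Σ_l g_l(k_l) = n. With c_{lk} ∈ {0,1} the indicator that k lies in the image g_l(ℕ_{≥1}), and K_m(c_{l1},...,c_{lm}) = Σ_{k=1}^{m} (−1)^{k−1} (k−1)! B_{m,k}(1! c_{l1}, ..., (m−k+1)! c_{l,m−k+1}) (where B_{m,k} are partial Bell polynomials), one has n · ν_r(n) = Σ_{l=1}^{r} Σ_{m=1}^{n} K_m(c_{l1},...,c_{lm}) ν_r(n − m)/(m−1)!. -/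
open PowerSeries Classical

/-- The partial Bell polynomial `B_{n,k}`, evaluated at the sequence `x` (indexed from 1),
defined by the standard recurrence `B_{n+1,k+1} = ∑_{i=0}^{n} C(n,i) x_{i+1} B_{n-i,k}`,
equivalent to `(1/k!) (∑_{j≥1} x_j t^j / j!)^k = ∑_{n≥k} B_{n,k} x t^n / n!`. -/
def partialBell {R : Type*} [CommRing R] : ℕ → ℕ → (ℕ → R) → R
  | 0, 0, _ => 1
  | _ + 1, 0, _ => 0
  | 0, _ + 1, _ => 0
  | n + 1, k + 1, x => ∑ i ∈ Finset.range (n + 1),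
      (n.choose i : R) * x (i + 1) * partialBell (n - i) k x

lemma aux_coeff_pow_zero {f : ℚ⟦X⟧} (hf : constantCoeff f = 0) {k m : ℕ} (h : m < k) :
    coeff m (f ^ k) = 0 := by
  have hd : (X : ℚ⟦X⟧) ^ k ∣ f ^ k := pow_dvd_pow_of_dvd (X_dvd_iff.mpr hf) k
  exact (X_pow_dvd_iff.mp hd) m h

lemma aux_key (f : ℚ⟦X⟧) (k n : ℕ) :
    ((n:ℚ) + 1) * coeff (n + 1) (f ^ (k + 1)) =
      ((k:ℚ) + 1) * ∑ i ∈ Finset.range (n + 1),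
        (coeff (i + 1) f * ((i : ℚ) + 1)) * coeff (n - i) (f ^ k) := by
  have h1 : coeff n (d⁄dX ℚ (f ^ (k + 1))) = coeff (n+1) (f ^ (k+1)) * (n + 1) := by
    rw [coeff_derivative]
  have h2 : d⁄dX ℚ (f ^ (k + 1)) = (k + 1) • (d⁄dX ℚ f * f ^ k) := by
    rw [Derivation.leibniz_pow]
    simp only [Nat.add_sub_cancel, smul_eq_mul]
    rw [mul_comm]
  rw [mul_comm, ← h1, h2, map_nsmul, nsmul_eq_mul, coeff_mul,
    Finset.Nat.sum_antidiagonal_eq_sum_range_succ_mk]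
  have h3 : ∀ i ∈ Finset.range (n+1),
      coeff i (d⁄dX ℚ f) * coeff (n - i) (f ^ k)
        = (coeff (i + 1) f * ((i : ℚ) + 1)) * coeff (n - i) (f ^ k) := by
    intro i _
    rw [coeff_derivative]
  rw [Finset.sum_congr rfl h3]
  push_cast
  ring

lemma aux_bell_coeff (f : ℚ⟦X⟧) (hf : constantCoeff f = 0) (k m : ℕ) :
    (partialBell m k (fun j => (j.factorial : ℚ) * coeff j f)) =
      (m.factorial : ℚ) * ((k.factorial : ℚ))⁻¹ * coeff m (f ^ k) := by
  induction k generalizing m with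
  | zero =>
    match m with
    | 0 => simp [partialBell]
    | n + 1 => simp [partialBell, coeff_one]
  | succ k ih =>
    match m with
    | 0 =>
      simp [partialBell, coeff_zero_eq_constantCoeff, map_pow, hf]
    | n + 1 =>
      simp only [partialBell]
      have hstep : ∀ i ∈ Finset.range (n + 1),
          (n.choose i : ℚ) * ((fun j => (j.factorial : ℚ) * coeff j f) (i + 1)) *
              partialBell (n - i) k (fun j => (j.factorial : ℚ) * coeff j f)
            = ((n.factorial : ℚ) * ((k.factorial : ℚ))⁻¹) *
                ((coeff (i + 1) f * ((i : ℚ) + 1)) * coeff (n - i) (f ^ k)) := by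
        intro i hi
        have hi' : i ≤ n := Nat.lt_succ_iff.mp (Finset.mem_range.mp hi)
        have hq : (n.choose i : ℚ) * i.factorial * (n - i).factorial = n.factorial := by
          exact_mod_cast congrArg (Nat.cast : ℕ → ℚ)
            (Nat.choose_mul_factorial_mul_factorial hi')
        rw [ih]
        simp only []
        push_cast [Nat.factorial_succ]
        linear_combination ((i : ℚ) + 1) * ((k.factorial : ℚ))⁻¹ * coeff (i+1) f *
          coeff (n - i) (f ^ k) * hq
      rw [Finset.sum_congr rfl hstep, ← Finset.mul_sum]
      have hkey := aux_key f k n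
      have hk0 : ((k : ℚ) + 1) ≠ 0 := by positivity
      have h4 : (((n+1).factorial : ℕ) : ℚ) * ((((k+1).factorial : ℕ) : ℚ))⁻¹ * coeff (n+1) (f ^ (k+1))
          = ((n.factorial : ℚ) * ((k.factorial : ℚ))⁻¹) *
              (((k:ℚ)+1)⁻¹ * (((n:ℚ)+1) * coeff (n+1) (f ^ (k+1)))) := by
        have hkf : ((k.factorial : ℚ)) ≠ 0 := by positivity
        push_cast [Nat.factorial_succ]
        field_simp
      rw [h4, hkey, inv_mul_cancel_left₀ hk0]

lemma aux_deriv_prod {ι : Type*} [DecidableEq ι] (s : Finset ι) (φ : ι → ℚ⟦X⟧) :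
    d⁄dX ℚ (∏ i ∈ s, φ i) = ∑ i ∈ s, d⁄dX ℚ (φ i) * ∏ j ∈ s.erase i, φ j := by
  induction s using Finset.induction_on with
  | empty => simp
  | insert a s ha ih =>
    rw [Finset.prod_insert ha, Derivation.leibniz, ih, Finset.sum_insert ha,
      Finset.erase_insert ha]
    rw [smul_eq_mul, smul_eq_mul, Finset.mul_sum]
    rw [add_comm]
    congr 1
    · ring
    · apply Finset.sum_congr rfl
      intro i hi
      rw [Finset.erase_insert_of_ne (by rintro rfl; exact ha hi)]
      rw [Finset.prod_insert (fun h => ha (Finset.mem_of_mem_erase h))]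
      ring

lemma aux_geom (f : ℚ⟦X⟧) (n : ℕ) :
    (1 + f) * (X * d⁄dX ℚ (∑ k ∈ Finset.Icc 1 n, ((-1:ℚ)^(k-1) * (k:ℚ)⁻¹) • f ^ k))
      = X * d⁄dX ℚ f - (X * d⁄dX ℚ f) * (-f)^n := by
  have hD : d⁄dX ℚ (∑ k ∈ Finset.Icc 1 n, ((-1:ℚ)^(k-1) * (k:ℚ)⁻¹) • f ^ k)
      = (∑ i ∈ Finset.range n, (-f)^i) * d⁄dX ℚ f := by
    rw [map_sum, Finset.sum_mul, ← Finset.Ico_add_one_right_eq_Icc, Finset.sum_Ico_eq_sum_range]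
    apply Finset.sum_congr (by norm_num)
    intro i _
    have e : (1:ℕ) + i - 1 = i := by omega
    have h1 : ((1 + i : ℕ) : ℚ) ≠ 0 := by positivity
    rw [Derivation.map_smul, Derivation.leibniz_pow, smul_eq_mul, nsmul_eq_mul, smul_eq_C_mul]
    simp only [e]
    have hn : ((1 + i : ℕ) : ℚ⟦X⟧) = C ((1 + i : ℕ) : ℚ) := (map_natCast C _).symm
    rw [hn, ← mul_assoc, ← map_mul]
    have h2 : (-1:ℚ)^i * (((1 + i : ℕ):ℚ))⁻¹ * ((1 + i : ℕ):ℚ) = (-1:ℚ)^i := by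
      field_simp
    rw [h2]
    have h3 : C ((-1:ℚ)^i) = (-1:ℚ⟦X⟧)^i := by
      rw [map_pow, map_neg, map_one]
    rw [h3, neg_pow f i]
    ring
  rw [hD]
  have hg := geom_sum_mul (-f) n
  linear_combination (-(X * d⁄dX ℚ f)) * hg

lemma aux_main (f G : ℚ⟦X⟧) (n : ℕ) (hf : constantCoeff f = 0) :
    coeff n ((X * d⁄dX ℚ (1 + f)) * G)
      = coeff n ((X * d⁄dX ℚ (∑ k ∈ Finset.Icc 1 n, ((-1:ℚ)^(k-1) * (k:ℚ)⁻¹) • f ^ k))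
          * ((1 + f) * G)) := by
  have hg := aux_geom f n
  have hD1 : d⁄dX ℚ (1 + f) = d⁄dX ℚ f := by
    rw [map_add]
    simp
  rw [hD1]
  have key : (X * d⁄dX ℚ f) * G
      = (X * d⁄dX ℚ (∑ k ∈ Finset.Icc 1 n, ((-1:ℚ)^(k-1) * (k:ℚ)⁻¹) • f ^ k)) * ((1 + f) * G)
        + ((X * d⁄dX ℚ f) * (-f)^n) * G := by
    linear_combination (-G) * hg
  rw [key, map_add]
  have h2 : coeff n (((X * d⁄dX ℚ f) * (-f)^n) * G) = 0 := by
    have hdvd : (X:ℚ⟦X⟧)^(n+1) ∣ ((X * d⁄dX ℚ f) * (-f)^n) * G := by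
      apply Dvd.dvd.mul_right
      have hd1 : (X:ℚ⟦X⟧) ∣ X * d⁄dX ℚ f := dvd_mul_right _ _
      have hd2 : (X:ℚ⟦X⟧)^n ∣ (-f)^n :=
        pow_dvd_pow_of_dvd (X_dvd_iff.mpr (by simp [hf])) n
      rw [pow_succ']
      exact mul_dvd_mul hd1 hd2
    exact X_pow_dvd_iff.mp hdvd n (Nat.lt_succ_self n)
  rw [h2, add_zero]

lemma aux_count (r : ℕ) (g : Fin r → ℕ → ℕ) (hmono : ∀ l, StrictMono (g l)) (n : ℕ) :
    ((Nat.card {k : Fin r → ℕ // ∑ l, g l (k l) = n} : ℕ) : ℚ)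
      = coeff n (∏ l, PowerSeries.mk (fun k => if ∃ m, g l m = k then (1:ℚ) else 0)) := by
  classical
  rw [coeff_prod]
  have hterm : ∀ d ∈ Finset.finsuppAntidiag (Finset.univ : Finset (Fin r)) n,
      (∏ l, coeff (d l) (PowerSeries.mk (fun k => if ∃ m, g l m = k then (1:ℚ) else 0)))
        = if ∀ l ∈ (Finset.univ : Finset (Fin r)), ∃ m, g l m = d l then 1 else 0 := by
    intro d _
    simp only [coeff_mk]
    rw [Finset.prod_boole]
    congr
  rw [Finset.sum_congr rfl hterm]
  rw [Finset.sum_boole]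
  set S := (Finset.finsuppAntidiag (Finset.univ : Finset (Fin r)) n).filter
      (fun d => ∀ l ∈ (Finset.univ : Finset (Fin r)), ∃ m, g l m = d l) with hS
  congr 1
  rw [← Nat.card_eq_finsetCard]
  apply Nat.card_congr
  have hmem : ∀ (k : {k : Fin r → ℕ // ∑ l, g l (k l) = n}),
      Finsupp.equivFunOnFinite.symm (fun l => g l (k.1 l)) ∈ S := by
    intro k
    simp only [hS, Finset.mem_filter, Finset.mem_finsuppAntidiag]
    refine ⟨⟨?_, fun x _ => Finset.mem_univ x⟩, ?_⟩
    · have h1 : Finset.univ.sum ⇑(Finsupp.equivFunOnFinite.symm fun l => g l (k.1 l))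
          = ∑ l, g l (k.1 l) := by simp
      exact h1.trans k.2
    · intro l _
      exact ⟨k.1 l, by simp⟩
  refine Equiv.ofBijective (fun k => (⟨_, hmem k⟩ : {d // d ∈ S})) ⟨?_, ?_⟩
  · rintro ⟨k1, h1⟩ ⟨k2, h2⟩ h
    simp only [Subtype.mk.injEq] at h ⊢
    have := Finsupp.equivFunOnFinite.symm.injective h
    funext l
    exact (hmono l).injective (congrFun this l)
  · rintro ⟨d, hd⟩
    simp only [hS, Finset.mem_filter, Finset.mem_finsuppAntidiag, Finset.mem_univ,
      forall_true_left, true_implies] at hd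
    obtain ⟨⟨hsum, -⟩, hex⟩ := hd
    choose m hm using hex
    refine ⟨⟨m, ?_⟩, ?_⟩
    · rw [← hsum]
      exact Finset.sum_congr rfl (fun l _ => hm l)
    · apply Subtype.ext
      ext l
      simp [hm l]

theorem general_additive_diophantine_recursion_bell
    (r : ℕ) (g : Fin r → ℕ → ℕ)
    (hmono : ∀ l, StrictMono (g l))
    (h0 : ∀ l, g l 0 = 0)
    (ν : ℕ → ℕ)
    (hν : ∀ n, ν n = Nat.card {k : Fin r → ℕ // ∑ l, g l (k l) = n})
    (c : Fin r → ℕ → ℚ)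
    (hc : ∀ l k, c l k = if ∃ m, 1 ≤ m ∧ g l m = k then (1 : ℚ) else 0)
    (K : Fin r → ℕ → ℚ)
    (hK : ∀ l m, K l m = ∑ k ∈ Finset.Icc 1 m,
      (-1 : ℚ) ^ (k - 1) * (k - 1).factorial *
        partialBell m k (fun j => (j.factorial : ℚ) * c l j))
    (n : ℕ) (hn : 1 ≤ n) :
    (n : ℚ) * ν n
      = ∑ l, ∑ m ∈ Finset.Icc 1 n,
          ((m - 1).factorial : ℚ)⁻¹ * K l m * ν (n - m) := by
  classical
  -- the series f l with coefficients c l k (k ≥ 1)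
  set f : Fin r → ℚ⟦X⟧ :=
    fun l => PowerSeries.mk (fun k => if k = 0 then 0 else c l k) with hfdef
  have hfc : ∀ l, constantCoeff (f l) = 0 := by
    intro l
    rw [← coeff_zero_eq_constantCoeff_apply]
    simp [hfdef]
  have hcf : ∀ l k, coeff k (f l) = c l k := by
    intro l k
    match k with
    | 0 =>
      rw [hc]
      have : ¬ ∃ m, 1 ≤ m ∧ g l m = 0 := by
        rintro ⟨m, hm1, hm2⟩
        have := (hmono l).lt_iff_lt.mpr (show 0 < m from hm1)
        omega
      simp [hfdef, this]
    | k + 1 => simp [hfdef]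
  -- φ l = 1 + f l
  have hφf : ∀ l, PowerSeries.mk (fun k => if ∃ m, g l m = k then (1:ℚ) else 0)
      = 1 + f l := by
    intro l
    ext k
    rw [map_add, coeff_mk, coeff_one]
    match k with
    | 0 =>
      have h1 : ∃ m, g l m = 0 := ⟨0, h0 l⟩
      simp [h1, hfdef]
    | k + 1 =>
      have h1 : (∃ m, g l m = k + 1) ↔ (∃ m, 1 ≤ m ∧ g l m = k + 1) := by
        constructor
        · rintro ⟨m, hm⟩
          refine ⟨m, ?_, hm⟩
          rcases Nat.eq_zero_or_pos m with rfl | h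
          · rw [h0 l] at hm; omega
          · exact h
        · rintro ⟨m, _, hm⟩
          exact ⟨m, hm⟩
      rw [hcf, hc, if_neg (Nat.succ_ne_zero k), zero_add]
      simp only [h1]
  -- the generating function F
  set F : ℚ⟦X⟧ := ∏ l, (1 + f l) with hFdef
  have hF : ∀ m, coeff m F = (ν m : ℚ) := by
    intro m
    rw [hν m, aux_count r g hmono m]
    rw [hFdef]
    congr 1
    exact Finset.prod_congr rfl (fun l _ => (hφf l).symm)
  -- the truncated logarithm P l
  set P : Fin r → ℚ⟦X⟧ :=
    fun l => ∑ k ∈ Finset.Icc 1 n, ((-1:ℚ)^(k-1) * (k:ℚ)⁻¹) • (f l) ^ k with hPdef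
  -- coefficients of X * d/dX (P l)
  have hcoeffP : ∀ l m, 1 ≤ m → m ≤ n →
      coeff m (X * d⁄dX ℚ (P l)) = ((m-1).factorial : ℚ)⁻¹ * K l m := by
    intro l m hm1 hm2
    obtain ⟨m, rfl⟩ : ∃ m', m = m' + 1 := ⟨m - 1, by omega⟩
    rw [coeff_succ_X_mul, coeff_derivative, hPdef]
    rw [map_sum]
    have hsub : Finset.Icc 1 (m+1) ⊆ Finset.Icc 1 n := by
      apply Finset.Icc_subset_Icc_right hm2
    have hvanish : ∀ k ∈ Finset.Icc 1 n, k ∉ Finset.Icc 1 (m+1) →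
        coeff (m+1) (((-1:ℚ)^(k-1) * (k:ℚ)⁻¹) • (f l) ^ k) = 0 := by
      intro k hk hk2
      simp only [Finset.mem_Icc] at hk hk2
      have hlt : m + 1 < k := by omega
      rw [map_smul, aux_coeff_pow_zero (hfc l) hlt, smul_zero]
    rw [← Finset.sum_subset hsub hvanish]
    rw [hK]
    have hBell : ∀ k, partialBell (m+1) k (fun j => (j.factorial : ℚ) * c l j)
        = ((m+1).factorial : ℚ) * ((k.factorial : ℚ))⁻¹ * coeff (m+1) ((f l) ^ k) := by
      intro k
      have : (fun j => (j.factorial : ℚ) * c l j)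
          = (fun j => (j.factorial : ℚ) * coeff j (f l)) := by
        funext j
        rw [hcf]
      rw [this, aux_bell_coeff (f l) (hfc l)]
    rw [Finset.sum_mul, Finset.mul_sum]
    apply Finset.sum_congr rfl
    intro k hk
    simp only [Finset.mem_Icc] at hk
    obtain ⟨j, rfl⟩ : ∃ j, k = j + 1 := ⟨k - 1, by omega⟩
    rw [hBell, map_smul, smul_eq_mul]
    have e1 : (j + 1 - 1) = j := by omega
    have e2 : (m + 1 - 1) = m := by omega
    rw [e1, e2]
    have hfac1 : ((m+1).factorial : ℚ) = ((m:ℚ)+1) * (m.factorial : ℚ) := by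
      push_cast [Nat.factorial_succ]; ring
    have hfac2 : (((j+1).factorial : ℕ) : ℚ) = ((j:ℚ)+1) * (j.factorial : ℚ) := by
      push_cast [Nat.factorial_succ]; ring
    have hj0 : ((j:ℚ)+1) ≠ 0 := by positivity
    have hjf : ((j.factorial : ℚ)) ≠ 0 := by positivity
    have hmf : ((m.factorial : ℚ)) ≠ 0 := by positivity
    rw [hfac1, hfac2]
    field_simp
    push_cast
    ring
  -- main computation
  have hDF : coeff n (X * d⁄dX ℚ F) = (n : ℚ) * ν n := by
    obtain ⟨n', rfl⟩ : ∃ n', n = n' + 1 := ⟨n - 1, by omega⟩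
    rw [coeff_succ_X_mul, coeff_derivative, hF]
    push_cast
    ring
  rw [← hDF, hFdef, aux_deriv_prod, Finset.mul_sum, map_sum]
  apply Finset.sum_congr rfl
  intro l _
  have hstep1 : X * (d⁄dX ℚ (1 + f l) * ∏ j ∈ Finset.univ.erase l, (1 + f j))
      = (X * d⁄dX ℚ (1 + f l)) * ∏ j ∈ Finset.univ.erase l, (1 + f j) := by ring
  rw [hstep1, aux_main (f l) _ n (hfc l)]
  have hprod : (1 + f l) * ∏ j ∈ Finset.univ.erase l, (1 + f j) = F := by
    rw [hFdef]
    exact Finset.mul_prod_erase Finset.univ (fun j => 1 + f j) (Finset.mem_univ l)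
  rw [hprod]
  -- expand the coefficient of the product
  rw [coeff_mul, Finset.Nat.sum_antidiagonal_eq_sum_range_succ_mk]
  rw [Finset.range_eq_Ico, Finset.sum_eq_sum_Ico_succ_bot (by omega : 0 < n + 1)]
  have hz : coeff 0 (X * d⁄dX ℚ (P l)) = 0 := by
    rw [coeff_zero_eq_constantCoeff_apply]
    simp [map_mul]
  rw [hz, zero_mul, zero_add, Finset.Ico_add_one_right_eq_Icc]
  apply Finset.sum_congr rfl
  intro m hm
  simp only [Finset.mem_Icc] at hm
  rw [hcoeffP l m hm.1 hm.2, hF]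
end
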